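/- arXiv:2406.09724 — 2 statements merged into one kernel-verified Lean document; each statement's English description precedes it below -/
import Mathlib

section
/- Let (W, pW) be a discrete valuation ring whose maximal ideal is generated by p, let S = W[X_1, …, X_{n-1}]_{(p, X_1, …, X_{n-1})} be the localization of the polynomial ring at the maximal ideal m_S = (p, X_1, …, X_{n-1}), let f(X) ∈ S[X] be a monic irreducible polynomial, and let m̃ be a maximal ideal of S[X]/(f(X)) containing the image x of X. If the localization R = (S[X]/(f(X)))_{m̃} is a regular local ring with maximal ideal m satisfying p ∈ m² (i.e., R is ramified), then the constant term f(0) of f and the coefficient of X in f both lie in m_S. -/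
open IsLocalRing

set_option synthInstance.maxHeartbeats 400000
set_option maxHeartbeats 1000000

/-- Remark after Theorem 2.1.  Let `(W, pW)` be a discrete valuation
ring whose maximal ideal is generated by `p`, let
`S = W[X₁, …, X_{n-1}]_{(p, X₁, …, X_{n-1})}` be the localization of the polynomial ring
at the maximal ideal `m_S = (p, X₁, …, X_{n-1})`, let `f(X) ∈ S[X]` be a monic
irreducible polynomial, and let `m̃` be a maximal ideal of `S[X]/(f(X))` (realized as
`AdjoinRoot f`) containing the image `x` of `X`.  If the localization
`R = (S[X]/(f(X)))_{m̃}` is a regular local ring with maximal ideal `m` satisfying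
`p ∈ m²`, then the constant term `f(0)` of `f` and the coefficient of `X` in `f` both lie
in `m_S`. -/
theorem coeff_mem_maximalIdeal_of_ramified
    (p : ℕ) (hp : p.Prime)
    (W : Type) [CommRing W] [IsDomain W] [IsDiscreteValuationRing W]
    (hW : maximalIdeal W = Ideal.span {(p : W)})
    (n : ℕ) (I : Ideal (MvPolynomial (Fin (n - 1)) W))
    (hI : I = Ideal.span ({MvPolynomial.C (p : W)} ∪ Set.range MvPolynomial.X))
    [I.IsMaximal]
    (S : Type) [CommRing S] [IsLocalRing S]
    [Algebra (MvPolynomial (Fin (n - 1)) W) S] [IsLocalization I.primeCompl S]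
    (f : Polynomial S) (hmonic : f.Monic) (hirr : Irreducible f)
    (mt : Ideal (AdjoinRoot f)) [mt.IsMaximal] (hx : AdjoinRoot.root f ∈ mt)
    (R : Type) [CommRing R] [IsLocalRing R]
    [Algebra (AdjoinRoot f) R] [IsLocalization mt.primeCompl R]
    (hRnoeth : IsNoetherianRing R)
    (hRreg : ∃ s : Finset R,
      (s.card : WithBot (WithTop ℕ)) = ringKrullDim R ∧
        Ideal.span (s : Set R) = maximalIdeal R)
    (hram : (p : R) ∈ maximalIdeal R ^ 2) :
    f.coeff 0 ∈ maximalIdeal S ∧ f.coeff 1 ∈ maximalIdeal S := by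
  classical
  haveI := hRnoeth
  -- `AdjoinRoot f` is module-finite (hence integral) over `S`
  have hTfin : Module.Finite S (AdjoinRoot f) := (AdjoinRoot.powerBasis' hmonic).finite
  have hTint : Algebra.IsIntegral S (AdjoinRoot f) := Algebra.IsIntegral.of_finite S _
  haveI hcm : (mt.comap (algebraMap S (AdjoinRoot f))).IsMaximal :=
    Ideal.isMaximal_comap_of_isIntegral_of_isMaximal mt
  have hcomap : mt.comap (algebraMap S (AdjoinRoot f)) = maximalIdeal S :=
    IsLocalRing.eq_maximalIdeal hcm
  have hmem_of : ∀ s : S, s ∈ maximalIdeal S ↔ algebraMap S (AdjoinRoot f) s ∈ mt := by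
    intro s
    rw [← hcomap]
    exact Iff.rfl
  -- decomposition of elements of `AdjoinRoot f`
  have hdec : ∀ g : Polynomial S, AdjoinRoot.mk f g
      = algebraMap S (AdjoinRoot f) (g.coeff 0) + AdjoinRoot.root f * AdjoinRoot.mk f g.divX := by
    intro g
    conv_lhs => rw [← Polynomial.divX_mul_X_add g]
    rw [map_add, map_mul, AdjoinRoot.mk_X, AdjoinRoot.mk_C, AdjoinRoot.algebraMap_eq]
    ring
  -- membership in `mt` in terms of the constant coefficient
  have hmt_iff : ∀ g : Polynomial S,
      (AdjoinRoot.mk f g ∈ mt ↔ g.coeff 0 ∈ maximalIdeal S) := by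
    intro g
    constructor
    · intro h
      rw [hmem_of]
      have he : algebraMap S (AdjoinRoot f) (g.coeff 0)
          = AdjoinRoot.mk f g - AdjoinRoot.root f * AdjoinRoot.mk f g.divX := by
        rw [hdec g]; ring
      rw [he]
      exact Ideal.sub_mem _ h (Ideal.mul_mem_right _ _ hx)
    · intro h
      rw [hdec g]
      exact Ideal.add_mem _ ((hmem_of _).mp h) (Ideal.mul_mem_right _ _ hx)
  -- Part 1
  have hc0 : f.coeff 0 ∈ maximalIdeal S := by
    have h := hmt_iff f
    rw [AdjoinRoot.mk_self] at h
    exact h.mp (Ideal.zero_mem mt)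
  refine ⟨hc0, ?_⟩
  by_contra hc1
  set A := MvPolynomial (Fin (n - 1)) W with hA
  set μ : A →+* S := algebraMap A S with hμ
  set ν : S →+* AdjoinRoot f := algebraMap S (AdjoinRoot f) with hν
  set π : AdjoinRoot f →+* R := algebraMap (AdjoinRoot f) R with hπ
  set JA : Ideal A := Ideal.span (Set.range MvPolynomial.X) with hJA
  set JS : Ideal S := JA.map μ with hJS
  set JT : Ideal (AdjoinRoot f) := JS.map ν with hJT
  set JR : Ideal R := JT.map π with hJR
  set m : Ideal R := maximalIdeal R with hm
  -- the maximal ideal of S is generated by p and the images of the Xᵢ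
  have hmS : maximalIdeal S = Ideal.span ({(p : S)} ∪ Set.range (⇑μ ∘ MvPolynomial.X)) := by
    rw [← IsLocalization.AtPrime.map_eq_maximalIdeal I S, hI, Ideal.map_span, Set.image_union,
      Set.image_singleton, map_natCast, map_natCast μ, ← Set.range_comp]
  -- the maximal ideal of R is the image of mt
  have hmR : mt.map π = m := IsLocalization.AtPrime.map_eq_maximalIdeal mt R
  -- images of the Xᵢ in R lie in m
  have hXmem : ∀ i, μ (MvPolynomial.X i) ∈ maximalIdeal S := by
    intro i
    rw [hmS]
    exact Ideal.subset_span (Or.inr ⟨i, rfl⟩)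
  have hJRm : JR ≤ m := by
    rw [hJR, Ideal.map_le_iff_le_comap, hJT, Ideal.map_le_iff_le_comap, hJS,
      Ideal.map_le_iff_le_comap, hJA, Ideal.span_le]
    rintro a ⟨i, rfl⟩
    simp only [SetLike.mem_coe, Ideal.mem_comap]
    rw [← hmR]
    exact Ideal.mem_map_of_mem π ((hmem_of _).mp (hXmem i))
  -- members of the maximal ideal of S map into JR ⊔ m^2
  have hSK : ∀ s : S, s ∈ maximalIdeal S → π (ν s) ∈ JR ⊔ m ^ 2 := by
    intro s hs
    rw [hmS] at hs
    have h2 : π (ν s) ∈ Ideal.map (π.comp ν) (Ideal.span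
        ({(p : S)} ∪ Set.range (⇑μ ∘ MvPolynomial.X))) := Ideal.mem_map_of_mem _ hs
    rw [Ideal.map_span] at h2
    refine Ideal.span_le.mpr ?_ h2
    rintro a ⟨b, (rfl | ⟨i, rfl⟩), rfl⟩
    · refine Ideal.mem_sup_right ?_
      simpa using hram
    · refine Ideal.mem_sup_left ?_
      rw [hJR, hJT]
      exact Ideal.mem_map_of_mem π (Ideal.mem_map_of_mem ν (Ideal.mem_map_of_mem μ
        (Ideal.subset_span ⟨i, rfl⟩)))
  -- the element x in R
  set xR : R := π (AdjoinRoot.root f) with hxR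
  have hxRm : xR ∈ m := by rw [← hmR]; exact Ideal.mem_map_of_mem π hx
  -- relation coming from f(root f) = 0
  have hrel : π (ν (f.coeff 1)) * xR
      = -(π (ν (f.coeff 0))) - π (AdjoinRoot.mk f f.divX.divX) * xR * xR := by
    have h0 : (0 : AdjoinRoot f) = ν (f.coeff 0) + AdjoinRoot.root f *
        (ν (f.divX.coeff 0) + AdjoinRoot.root f * AdjoinRoot.mk f f.divX.divX) := by
      conv_lhs => rw [← AdjoinRoot.mk_self (f := f)]
      rw [hdec f, hdec f.divX]
    have h1 := congrArg π h0
    rw [map_zero, map_add, map_mul, map_add, map_mul, Polynomial.coeff_divX] at h1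
    rw [show (0 : ℕ) + 1 = 1 from rfl] at h1
    linear_combination -h1
  -- xR lies in JR ⊔ m^2 since coeff 1 is a unit
  have hxRK : xR ∈ JR ⊔ m ^ 2 := by
    have hu : IsUnit (π (ν (f.coeff 1))) :=
      (IsLocalRing.notMem_maximalIdeal.mp hc1).map (π.comp ν)
    obtain ⟨v, hv⟩ := hu.exists_left_inv
    have hmem : π (ν (f.coeff 1)) * xR ∈ JR ⊔ m ^ 2 := by
      rw [hrel]
      refine Ideal.sub_mem _ (neg_mem (hSK _ hc0)) (Ideal.mem_sup_right ?_)
      rw [pow_two]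
      exact Ideal.mul_mem_mul (Ideal.mul_mem_left _ _ hxRm) hxRm
    have hxe : xR = v * (π (ν (f.coeff 1)) * xR) := by rw [← mul_assoc, hv, one_mul]
    rw [hxe]
    exact Ideal.mul_mem_left _ _ hmem
  -- Nakayama: m = JR
  have hmJR : m ≤ JR := by
    refine Submodule.le_of_le_smul_of_le_jacobson_bot (IsNoetherian.noetherian m)
      (IsLocalRing.maximalIdeal_le_jacobson ⊥) ?_
    have hsq : m • m = m ^ 2 := by rw [smul_eq_mul, pow_two]
    have hstep : Ideal.map π mt ≤ JR ⊔ m ^ 2 := by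
      rw [Ideal.map_le_iff_le_comap]
      intro t ht
      obtain ⟨g, rfl⟩ := AdjoinRoot.mk_surjective t
      have hg0 : g.coeff 0 ∈ maximalIdeal S := (hmt_iff g).mp ht
      rw [Ideal.mem_comap, hdec g, map_add, map_mul]
      exact Ideal.add_mem _ (hSK _ hg0) (Ideal.mul_mem_right _ _ hxRK)
    rw [hsq]
    exact le_trans (le_of_eq hmR.symm) hstep
  have hpJR : (p : R) ∈ JR := hmJR (Ideal.pow_le_self two_ne_zero hram)
  -- pull back to AdjoinRoot f
  have hpT : ∃ w : mt.primeCompl, (p : AdjoinRoot f) * w ∈ JT := by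
    rw [hJR] at hpJR
    have h2 : π ((p : AdjoinRoot f)) ∈ Ideal.map π JT := by rwa [map_natCast]
    rw [show π = algebraMap (AdjoinRoot f) R from rfl,
      IsLocalization.mem_map_algebraMap_iff mt.primeCompl R] at h2
    obtain ⟨⟨j, u⟩, hju⟩ := h2
    have h3 : algebraMap (AdjoinRoot f) R ((p : AdjoinRoot f) * u) = algebraMap _ _ (j : AdjoinRoot f) := by
      rw [map_mul]; exact hju
    obtain ⟨c, hc⟩ := (IsLocalization.eq_iff_exists mt.primeCompl R).mp h3
    refine ⟨c * u, ?_⟩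
    have h4 : (p : AdjoinRoot f) * ((c * u : mt.primeCompl) : AdjoinRoot f)
        = (c : AdjoinRoot f) * ((p : AdjoinRoot f) * u) := by
      push_cast
      ring
    rw [h4, hc]
    exact Ideal.mul_mem_left _ _ j.2
  -- the ideal of elements all of whose mod-f coefficients lie in JS
  set q : S →+* S ⧸ JS := Ideal.Quotient.mk JS with hq
  set KT : Ideal (AdjoinRoot f) :=
    { carrier := {t | (AdjoinRoot.modByMonicHom hmonic t).map q = 0}
      add_mem' := fun {a b} ha hb => by
        simp only [Set.mem_setOf_eq, map_add, Polynomial.map_add] at *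
        rw [ha, hb, add_zero]
      zero_mem' := by simp only [Set.mem_setOf_eq, map_zero, Polynomial.map_zero]
      smul_mem' := fun c t ht => by
        obtain ⟨gc, rfl⟩ := AdjoinRoot.mk_surjective c
        have hmk : AdjoinRoot.mk f (AdjoinRoot.modByMonicHom hmonic t) = t :=
          AdjoinRoot.mk_leftInverse hmonic t
        simp only [Set.mem_setOf_eq] at ht ⊢
        rw [smul_eq_mul, ← hmk, ← map_mul, AdjoinRoot.modByMonicHom_mk,
          Polynomial.map_modByMonic _ hmonic, Polynomial.map_mul, ht, mul_zero,
          Polynomial.zero_modByMonic] } with hKT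
  have hdegpos : 0 < f.degree := by
    have hnd : f.natDegree ≠ 0 := fun h =>
      hirr.not_isUnit (by rw [hmonic.natDegree_eq_zero.mp h]; exact isUnit_one)
    exact Polynomial.natDegree_pos_iff_degree_pos.mp (Nat.pos_of_ne_zero hnd)
  have hJTK : JT ≤ KT := by
    rw [hJT, Ideal.map_le_iff_le_comap]
    intro s hs
    show (AdjoinRoot.modByMonicHom hmonic (ν s)).map q = 0
    have hCs : ν s = AdjoinRoot.mk f (Polynomial.C s) := (AdjoinRoot.mk_C s).symm
    rw [hCs, AdjoinRoot.modByMonicHom_mk,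
      (Polynomial.modByMonic_eq_self_iff hmonic).mpr
        (lt_of_le_of_lt (Polynomial.degree_C_le) hdegpos),
      Polynomial.map_C, Ideal.Quotient.eq_zero_iff_mem.mpr hs, Polynomial.C_0]
  -- extract the constant coefficient
  obtain ⟨w, hw⟩ := hpT
  have hwK : (AdjoinRoot.modByMonicHom hmonic ((p : AdjoinRoot f) * w)).map q = 0 := hJTK hw
  have hsm : (p : AdjoinRoot f) * (w : AdjoinRoot f) = (p : S) • (w : AdjoinRoot f) := by
    rw [Algebra.smul_def, map_natCast]
  rw [hsm, map_smul] at hwK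
  set sw := (AdjoinRoot.modByMonicHom hmonic (w : AdjoinRoot f)).coeff 0 with hsw
  have hcoeff : (p : S) * sw ∈ JS := by
    have h5 := congrArg (fun g : Polynomial (S ⧸ JS) => g.coeff 0) hwK
    simp only [Polynomial.coeff_map, Polynomial.coeff_zero, Polynomial.coeff_smul,
      smul_eq_mul] at h5
    exact Ideal.Quotient.eq_zero_iff_mem.mp h5
  have hswu : IsUnit sw := by
    by_contra hns
    apply w.2
    have hmk : (w : AdjoinRoot f) = AdjoinRoot.mk f (AdjoinRoot.modByMonicHom hmonic w) :=
      (AdjoinRoot.mk_leftInverse hmonic _).symm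
    rw [hmk]
    exact (hmt_iff _).mpr hns
  obtain ⟨z, hz⟩ := hswu.exists_left_inv
  have hpJS : (p : S) ∈ JS := by
    have h6 : (p : S) = z * ((p : S) * sw) := by linear_combination -(p : S) * hz
    rw [h6]
    exact Ideal.mul_mem_left _ _ hcoeff
  -- pull back to the polynomial ring
  have h0nz : (0 : A) ∉ I.primeCompl := fun h0 => h0 I.zero_mem
  have hinj : Function.Injective μ :=
    IsLocalization.injective S (le_nonZeroDivisors_of_noZeroDivisors h0nz)
  have h7 : μ ((p : A)) ∈ JS := by rwa [map_natCast]
  rw [hJS, show μ = algebraMap A S from rfl,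
    IsLocalization.mem_map_algebraMap_iff I.primeCompl S] at h7
  obtain ⟨⟨j, c⟩, hjc⟩ := h7
  have heq : (p : A) * c = j := hinj (by rw [map_mul]; exact hjc)
  have hccJA : ∀ a ∈ JA, MvPolynomial.constantCoeff a = 0 := by
    intro a ha
    have hle : JA ≤ RingHom.ker (MvPolynomial.constantCoeff (R := W) (σ := Fin (n - 1))) := by
      rw [hJA, Ideal.span_le]
      rintro b ⟨i, rfl⟩
      simp only [SetLike.mem_coe, RingHom.mem_ker]
      exact MvPolynomial.constantCoeff_X (R := W) i
    exact RingHom.mem_ker.mp (hle ha)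
  have hpW : ((p : ℕ) : W) ≠ 0 := by
    intro h
    apply IsDiscreteValuationRing.not_isField W
    rw [IsLocalRing.isField_iff_maximalIdeal_eq, hW, h]
    exact Ideal.span_singleton_eq_bot.mpr rfl
  have hccc : MvPolynomial.constantCoeff (c : A) = 0 := by
    have h8 := congrArg MvPolynomial.constantCoeff heq
    rw [map_mul, map_natCast, hccJA (j : A) j.2] at h8
    exact (mul_eq_zero.mp h8).resolve_left hpW
  have hsub : ∀ a : A, a - MvPolynomial.C (MvPolynomial.constantCoeff a) ∈ JA := by
    intro a
    induction a using MvPolynomial.induction_on with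
    | C w => simp
    | add a b ha hb =>
      have h9 := JA.add_mem ha hb
      have h10 : a + b - MvPolynomial.C (MvPolynomial.constantCoeff (a + b))
          = (a - MvPolynomial.C (MvPolynomial.constantCoeff a))
            + (b - MvPolynomial.C (MvPolynomial.constantCoeff b)) := by
        rw [map_add, map_add]
        ring
      rw [h10]
      exact h9
    | mul_X a i ha =>
      rw [map_mul, MvPolynomial.constantCoeff_X, mul_zero, map_zero, sub_zero]
      exact Ideal.mul_mem_left _ _ (Ideal.subset_span ⟨i, rfl⟩)
  have hcJA : (c : A) ∈ JA := by
    have h11 := hsub (c : A)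
    rwa [hccc, map_zero, sub_zero] at h11
  rw [hJA] at hcJA
  have hcI : (c : A) ∈ I := by
    have h12 : (c : A) ∈ Ideal.span ({MvPolynomial.C (p : W)} ∪ Set.range MvPolynomial.X) :=
      Ideal.span_mono Set.subset_union_right hcJA
    rwa [← hI] at h12
  exact c.2 hcI
end

section
/- Let (V, pV) be a discrete valuation ring with uniformizer p, let (R, m) be a local ring containing V with p ∈ m, and let T_1, …, T_d ∈ R be elements whose images t_1, …, t_d in the residue field R/m are algebraically independent over the field V/pV. Then T_1, …, T_d are algebraically independent over V, i.e., no nonzero polynomial F ∈ V[Y_1, …, Y_d] satisfies F(T_1, …, T_d) = 0. -/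
open IsLocalRing

/-- Let `(V, pV)` be a discrete valuation ring with uniformizer `p`, and
let `(R, m)` be a local ring containing `V` with `p ∈ m`. If the images of `T₁, …, T_d` in
the residue field `R/m` are algebraically independent over `V/pV` (equivalently: every
polynomial `F` over `V` with `F(T₁, …, T_d) ∈ m` has all of its coefficients in `pV`),
then `T₁, …, T_d` are algebraically independent over `V`, i.e. no nonzero polynomial
`F ∈ V[Y₁, …, Y_d]` satisfies `F(T₁, …, T_d) = 0`. -/
theorem algebraicIndependent_of_residue_algebraicIndependent
    (V : Type) [CommRing V] [IsDomain V] [IsDiscreteValuationRing V]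
    (p : V) (hV : maximalIdeal V = Ideal.span {p})
    (R : Type) [CommRing R] [IsLocalRing R] [Algebra V R]
    (hinj : Function.Injective (algebraMap V R))
    (hpm : algebraMap V R p ∈ maximalIdeal R)
    (d : ℕ) (T : Fin d → R)
    (hind : ∀ F : MvPolynomial (Fin d) V,
      MvPolynomial.aeval T F ∈ maximalIdeal R →
      ∀ i : Fin d →₀ ℕ, MvPolynomial.coeff i F ∈ Ideal.span {p}) :
    ∀ F : MvPolynomial (Fin d) V, F ≠ 0 → MvPolynomial.aeval T F ≠ 0 := by
  intro F hF h0
  have hp0 : p ≠ 0 := fun e =>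
    IsDiscreteValuationRing.not_a_field V (by rw [hV, e, Ideal.span_singleton_eq_bot])
  have hpirr : Irreducible p :=
    IsDiscreteValuationRing.irreducible_of_span_eq_maximalIdeal p hp0 hV
  -- key claim: for all n, F is divisible by C (p^n) with quotient G such that
  -- (algebraMap V R (p^n)) * aeval T G = 0
  have key : ∀ n : ℕ, ∃ G : MvPolynomial (Fin d) V,
      F = MvPolynomial.C (p ^ n) * G ∧
      (algebraMap V R) (p ^ n) * MvPolynomial.aeval T G = 0 := by
    intro n
    induction n with
    | zero => exact ⟨F, by simp, by simpa using h0⟩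
    | succ n ih =>
      obtain ⟨G, hG, hGz⟩ := ih
      -- aeval T G is not a unit
      have hGm : MvPolynomial.aeval T G ∈ maximalIdeal R := by
        rw [mem_maximalIdeal, mem_nonunits_iff]
        intro hu
        have : (algebraMap V R) (p ^ n) = 0 := by
          obtain ⟨u, hu'⟩ := hu
          have := congrArg (· * ((u⁻¹ : Rˣ) : R)) hGz
          simpa [← hu', mul_assoc] using this
        exact (pow_ne_zero n hp0) (hinj (by simpa using this))
      have hcoe : ∀ i, p ∣ MvPolynomial.coeff i G := by
        intro i
        have := hind G hGm i
        rwa [Ideal.mem_span_singleton] at this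
      obtain ⟨G', hG'⟩ := (MvPolynomial.C_dvd_iff_dvd_coeff p G).mpr hcoe
      refine ⟨G', ?_, ?_⟩
      · rw [hG, hG', pow_succ, map_mul]; ring
      · have : MvPolynomial.aeval T G = (algebraMap V R) p * MvPolynomial.aeval T G' := by
          rw [hG', map_mul, MvPolynomial.aeval_C]
        calc (algebraMap V R) (p ^ (n + 1)) * MvPolynomial.aeval T G'
            = (algebraMap V R) (p ^ n) * ((algebraMap V R) p * MvPolynomial.aeval T G') := by
              rw [pow_succ, map_mul]; ring
          _ = (algebraMap V R) (p ^ n) * MvPolynomial.aeval T G := by rw [this]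
          _ = 0 := hGz
  -- pick a nonzero coefficient of F; it is divisible by p^n for all n, contradiction
  obtain ⟨i, hi⟩ : ∃ i, MvPolynomial.coeff i F ≠ 0 := by
    by_contra h
    push_neg at h
    exact hF (MvPolynomial.ext _ _ (by simpa using h))
  have hdvd : ∀ n : ℕ, p ^ n ∣ MvPolynomial.coeff i F := by
    intro n
    obtain ⟨G, hG, -⟩ := key n
    exact ⟨MvPolynomial.coeff i G, by rw [hG, MvPolynomial.coeff_C_mul]⟩
  obtain ⟨n, hn⟩ := FiniteMultiplicity.of_not_isUnit hpirr.not_isUnit hi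
  exact hn (hdvd (n + 1))
end
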